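/- Let A be an N×N Hermitian positive definite matrix, B an N×M matrix, X the solution of AX + XA* = BB*, and let p₁,…,p_r be positive reals. Define Z₁ = √(2p₁)(A+p₁I)⁻¹B and Z_k = √(p_k/p_{k−1})(I − (p_k+p_{k−1})(A+p_kI)⁻¹)Z_{k−1} for k = 2,…,r, and Z = [Z₁ ⋯ Z_r]. Then X − ZZ* = φ(A) X φ(A)*, where φ(x) = Π_{j=1}^{r}(x−p_j)/(x+p_j). Consequently ‖X − ZZ*‖ ≤ ‖X‖ · max_{x ∈ [λ_min(A), λ_max(A)]} |φ(x)|². -/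

import Mathlib

open Matrix
open scoped ComplexOrder

noncomputable def opNorm {𝕜 : Type*} [RCLike 𝕜] {m n : ℕ} (M : Matrix (Fin m) (Fin n) 𝕜) : ℝ :=
  ‖LinearMap.toContinuousLinearMap (Matrix.toEuclideanLin M)‖

/-- The CF-ADI iterates: `adiZ A B p k` is the `(k+1)`-st block `Z_{k+1}` (0-indexed):
`Z₁ = √(2p₁)(A+p₁I)⁻¹B`, and
`Z_{k+1} = √(p_{k+1}/p_k)(I - (p_{k+1}+p_k)(A+p_{k+1}I)⁻¹)Z_k`. -/
noncomputable def adiZ {N M : ℕ} (A : Matrix (Fin N) (Fin N) ℂ) (B : Matrix (Fin N) (Fin M) ℂ)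
    (p : ℕ → ℝ) : ℕ → Matrix (Fin N) (Fin M) ℂ
  | 0 => (Real.sqrt (2 * p 0) : ℂ) • ((A + (p 0 : ℂ) • 1)⁻¹ * B)
  | k + 1 => (Real.sqrt (p (k + 1) / p k) : ℂ) •
      ((1 - ((p (k + 1) + p k : ℝ) : ℂ) • (A + (p (k + 1) : ℂ) • 1)⁻¹) * adiZ A B p k)

open scoped Matrix.Norms.L2Operator

lemma opNorm_eq_l2 {m n : ℕ} (M : Matrix (Fin m) (Fin n) ℂ) : opNorm M = ‖M‖ := rfl

lemma l2norm_diagonal_le {n : ℕ} (v : Fin n → ℂ) (c : ℝ) (hc : 0 ≤ c)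
    (h : ∀ i, ‖v i‖ ≤ c) : ‖Matrix.diagonal v‖ ≤ c := by
  rw [Matrix.l2_opNorm_def]
  apply ContinuousLinearMap.opNorm_le_bound _ hc
  intro x
  rw [LinearEquiv.trans_apply, LinearMap.coe_toContinuousLinearMap']
  have h1 : ∀ y : EuclideanSpace ℂ (Fin n), ‖y‖ = Real.sqrt (∑ i, ‖y i‖ ^ 2) := by
    intro y; rw [EuclideanSpace.norm_eq]
  rw [h1, h1]
  rw [← Real.sqrt_sq hc, ← Real.sqrt_mul (by positivity)]
  apply Real.sqrt_le_sqrt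
  rw [Finset.mul_sum]
  apply Finset.sum_le_sum
  intro i _
  have h2 : (Matrix.toEuclideanLin (Matrix.diagonal v) x) i = v i * x i := by
    simp [Matrix.toEuclideanLin_apply, Matrix.mulVec_diagonal]
  rw [h2]
  rw [norm_mul, mul_pow]
  have := h i
  have hvc : ‖v i‖ ^ 2 ≤ c ^ 2 := by nlinarith [norm_nonneg (v i)]
  nlinarith [norm_nonneg (x i), sq_nonneg (x i : ℂ).re]

section conj
variable {n : ℕ} (U : Matrix (Fin n) (Fin n) ℂ)

lemma myconj_mul (hU' : Uᴴ * U = 1) (v w : Fin n → ℂ) :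
    (U * diagonal v * Uᴴ) * (U * diagonal w * Uᴴ) = U * diagonal (fun i => v i * w i) * Uᴴ := by
  rw [← diagonal_mul_diagonal]
  calc (U * diagonal v * Uᴴ) * (U * diagonal w * Uᴴ)
      = U * diagonal v * (Uᴴ * U) * diagonal w * Uᴴ := by simp only [mul_assoc]
    _ = U * (diagonal v * diagonal w) * Uᴴ := by rw [hU']; simp only [mul_one, mul_assoc]

lemma myconj_add (v w : Fin n → ℂ) :
    (U * diagonal v * Uᴴ) + (U * diagonal w * Uᴴ) = U * diagonal (fun i => v i + w i) * Uᴴ := by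
  rw [← diagonal_add, mul_add, add_mul]

lemma myconj_one (hU : U * Uᴴ = 1) : U * diagonal (fun _ => (1:ℂ)) * Uᴴ = 1 := by
  have h : diagonal (fun _ => (1:ℂ)) = (1 : Matrix (Fin n) (Fin n) ℂ) := diagonal_one
  rw [h, mul_one, hU]

lemma myconj_inv (hU : U * Uᴴ = 1) (hU' : Uᴴ * U = 1) (v : Fin n → ℂ) (hv : ∀ i, v i ≠ 0) :
    (U * diagonal v * Uᴴ)⁻¹ = U * diagonal v⁻¹ * Uᴴ := by
  apply Matrix.inv_eq_right_inv
  rw [myconj_mul U hU']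
  have h : (fun i => v i * v⁻¹ i) = fun _ => (1:ℂ) := by
    funext i; exact mul_inv_cancel₀ (hv i)
  rw [h, myconj_one U hU]

lemma myconj_ct (v : Fin n → ℂ) :
    (U * diagonal v * Uᴴ)ᴴ = U * diagonal (star v) * Uᴴ := by
  rw [conjTranspose_mul, conjTranspose_mul, conjTranspose_conjTranspose,
    diagonal_conjTranspose, mul_assoc]

lemma myconj_comm (hU' : Uᴴ * U = 1) (v w : Fin n → ℂ) :
    (U * diagonal v * Uᴴ) * (U * diagonal w * Uᴴ) = (U * diagonal w * Uᴴ) * (U * diagonal v * Uᴴ) := by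
  rw [myconj_mul U hU', myconj_mul U hU']
  have h : (fun i => v i * w i) = fun i => w i * v i := by funext i; ring
  rw [h]

lemma myconj_congr (v w : Fin n → ℂ) (h : ∀ i, v i = w i) :
    U * diagonal v * Uᴴ = U * diagonal w * Uᴴ := by
  have h2 : v = w := funext h
  rw [h2]

end conj

lemma adi_step {N M : ℕ} (A : Matrix (Fin N) (Fin N) ℂ) (hAh : Aᴴ = A)
    (q : ℝ) (E C : Matrix (Fin N) (Fin N) ℂ) (hE : E = A + (q:ℂ) • 1)
    (hCE : C * E = 1) (hEC : E * C = 1)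
    (Y : Matrix (Fin N) (Fin N) ℂ) (B : Matrix (Fin N) (Fin M) ℂ)
    (hY : A * Y + Y * Aᴴ = B * Bᴴ) :
    Y - ((2 * q : ℝ) : ℂ) • ((C * B) * (C * B)ᴴ)
      = ((A - (q:ℂ) • 1) * C) * Y * ((A - (q:ℂ) • 1) * C)ᴴ := by
  have hEh : Eᴴ = E := by
    rw [hE, conjTranspose_add, hAh, conjTranspose_smul, conjTranspose_one]
    simp [Complex.star_def, Complex.conj_ofReal]
  have hCh : Cᴴ = C := by
    have h1 : Cᴴ * E = 1 := by
      have h2 := congrArg conjTranspose hEC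
      rwa [conjTranspose_mul, conjTranspose_one, hEh] at h2
    calc Cᴴ = Cᴴ * (E * C) := by rw [hEC, mul_one]
      _ = (Cᴴ * E) * C := by rw [mul_assoc]
      _ = C := by rw [h1, one_mul]
  set S : Matrix (Fin N) (Fin N) ℂ := A - (q:ℂ) • 1 with hS
  have hSh : Sᴴ = S := by
    rw [hS, conjTranspose_sub, hAh, conjTranspose_smul, conjTranspose_one]
    simp [Complex.star_def, Complex.conj_ofReal]
  have hpsiH : (S * C)ᴴ = C * S := by rw [conjTranspose_mul, hCh, hSh]
  rw [hpsiH]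
  have cancel : ∀ P Q : Matrix (Fin N) (Fin N) ℂ, E * P * E = E * Q * E → P = Q := by
    intro P Q h
    calc P = (C * E) * P * (E * C) := by rw [hCE, hEC, one_mul, mul_one]
      _ = C * (E * P * E) * C := by simp only [mul_assoc]
      _ = C * (E * Q * E) * C := by rw [h]
      _ = (C * E) * Q * (E * C) := by simp only [mul_assoc]
      _ = Q := by rw [hCE, hEC, one_mul, mul_one]
  apply cancel
  have hcommE : E * S = S * E := by
    rw [hE, hS]
    simp only [add_mul, mul_add, sub_mul, mul_sub, smul_mul_assoc, mul_smul_comm,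
      one_mul, mul_one, smul_smul, smul_sub, smul_add]
    module
  have key1 : E * (S * C * Y * (C * S)) * E = S * Y * S := by
    calc E * (S * C * Y * (C * S)) * E
        = (E * S) * C * Y * (C * (S * E)) := by simp only [mul_assoc]
      _ = (E * S) * C * Y * ((C * E) * S) := by
          rw [show C * (S * E) = (C * E) * S from by rw [← hcommE]; simp only [mul_assoc]]
      _ = (E * S) * C * Y * S := by rw [hCE, one_mul]
      _ = (S * (E * C)) * Y * S := by rw [hcommE]; simp only [mul_assoc]
      _ = S * Y * S := by rw [hEC, mul_one]
  rw [key1]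
  have key2 : E * (Y - ((2 * q : ℝ) : ℂ) • ((C * B) * (Bᴴ * C))) * E
      = E * Y * E - ((2 * q : ℝ) : ℂ) • ((E * C) * (B * Bᴴ) * (C * E)) := by
    simp only [mul_sub, sub_mul, mul_smul_comm, smul_mul_assoc, mul_assoc,
      Matrix.mul_assoc, Matrix.smul_mul, Matrix.mul_smul]
  rw [conjTranspose_mul, hCh, key2, hEC, hCE, one_mul, mul_one, ← hY, hAh, hE, hS]
  rw [Complex.ofReal_mul, Complex.ofReal_ofNat]
  simp only [add_mul, mul_add, sub_mul, mul_sub, smul_mul_assoc, mul_smul_comm, one_mul,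
    mul_one, smul_smul, smul_sub, smul_add, mul_assoc]
  module

/-- The ADI error formula: with `X` solving `AX + XAᴴ = BBᴴ`, positive shifts `p₁,…,p_r`,
`Z = [Z₁ ⋯ Z_r]` the concatenated CF-ADI factor, and `φ(x) = Π_j (x-p_j)/(x+p_j)`,
one has `X - ZZᴴ = φ(A) X φ(A)ᴴ`, hence
`‖X - ZZᴴ‖ ≤ ‖X‖ · sup_{x ∈ [λ_min(A), λ_max(A)]} |φ(x)|²`. -/
theorem stmt19 {N M r : ℕ} (hN : 0 < N) (hr : 0 < r)
    (A : Matrix (Fin N) (Fin N) ℂ) (hA : A.IsHermitian) (hApd : A.PosDef)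
    (B : Matrix (Fin N) (Fin M) ℂ)
    (X : Matrix (Fin N) (Fin N) ℂ) (hX : A * X + X * Aᴴ = B * Bᴴ)
    (p : ℕ → ℝ) (hp : ∀ k, k < r → 0 < p k)
    (Z : Matrix (Fin N) (Fin r × Fin M) ℂ)
    (hZ : Z = Matrix.of fun i kl => adiZ A B p (kl.1 : ℕ) i kl.2)
    (φA : Matrix (Fin N) (Fin N) ℂ)
    (hφA : φA = ((List.finRange r).map
      (fun j => (A - (p (j : ℕ) : ℂ) • 1) * (A + (p (j : ℕ) : ℂ) • 1)⁻¹)).prod)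
    (φ : ℝ → ℝ) (hφ : φ = fun x => ∏ j : Fin r, (x - p (j : ℕ)) / (x + p (j : ℕ))) :
    X - Z * Zᴴ = φA * X * φAᴴ ∧
    opNorm (X - Z * Zᴴ) ≤ opNorm X *
      ⨆ x ∈ Set.Icc (⨅ i, hA.eigenvalues i) (⨆ i, hA.eigenvalues i), |φ x| ^ 2 := by
  classical
  have hNe : Nonempty (Fin N) := ⟨⟨0, hN⟩⟩
  set U : Matrix (Fin N) (Fin N) ℂ := (hA.eigenvectorUnitary : Matrix (Fin N) (Fin N) ℂ) with hUdef
  set d : Fin N → ℝ := hA.eigenvalues with hd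
  have hU : U * Uᴴ = 1 := by
    rw [← Matrix.star_eq_conjTranspose]
    exact (Unitary.mem_iff.mp hA.eigenvectorUnitary.2).2
  have hU' : Uᴴ * U = 1 := by
    rw [← Matrix.star_eq_conjTranspose]
    exact (Unitary.mem_iff.mp hA.eigenvectorUnitary.2).1
  have hdpos : ∀ i, 0 < d i := fun i => hApd.eigenvalues_pos i
  have hspec : A = U * diagonal (fun i => (d i : ℂ)) * Uᴴ := by
    have h := hA.spectral_theorem
    rw [← Matrix.star_eq_conjTranspose]
    rw [Unitary.conjStarAlgAut_apply] at h
    exact h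
  -- shifted matrices
  have hshift : ∀ c : ℂ, A + c • 1 = U * diagonal (fun i => (d i : ℂ) + c) * Uᴴ := by
    intro c
    have h1 : (c • (1 : Matrix (Fin N) (Fin N) ℂ)) = U * diagonal (fun _ => c) * Uᴴ := by
      have h2 : diagonal (fun _ : Fin N => c) = c • (1 : Matrix (Fin N) (Fin N) ℂ) := by
        ext i j
        by_cases hij : i = j <;> simp [hij, Matrix.one_apply, Matrix.diagonal_apply]
      rw [h2, Matrix.mul_smul, Matrix.smul_mul, mul_one, hU]
    rw [hspec, h1, myconj_add]
  have hshift' : ∀ c : ℂ, A - c • 1 = U * diagonal (fun i => (d i : ℂ) - c) * Uᴴ := by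
    intro c
    have := hshift (-c)
    rw [neg_smul, ← sub_eq_add_neg] at this
    rw [this]
    have h3 : (fun i => (d i : ℂ) + -c) = fun i => (d i : ℂ) - c := by
      funext i; ring
    rw [h3]
  have hEne : ∀ s : ℝ, 0 < s → ∀ i, (d i : ℂ) + (s : ℂ) ≠ 0 := by
    intro s hs i
    have : ((d i + s : ℝ) : ℂ) ≠ 0 := by
      rw [Complex.ofReal_ne_zero]
      have := hdpos i; linarith
    rwa [Complex.ofReal_add] at this
  have hCs : ∀ s : ℝ, 0 < s →
      (A + (s:ℂ) • 1)⁻¹ = U * diagonal (fun i => ((d i : ℂ) + s)⁻¹) * Uᴴ := by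
    intro s hs
    rw [hshift (s:ℂ), myconj_inv U hU hU' _ (hEne s hs)]
    congr 1
  have hmulinv : ∀ s : ℝ, 0 < s → (A + (s:ℂ) • 1) * (A + (s:ℂ) • 1)⁻¹ = 1 := by
    intro s hs
    rw [hCs s hs, hshift (s:ℂ), myconj_mul U hU']
    have h : (fun i => ((d i : ℂ) + s) * ((d i : ℂ) + s)⁻¹) = fun _ => (1:ℂ) := by
      funext i; exact mul_inv_cancel₀ (hEne s hs i)
    rw [h, myconj_one U hU]
  have hinvmul : ∀ s : ℝ, 0 < s → (A + (s:ℂ) • 1)⁻¹ * (A + (s:ℂ) • 1) = 1 := by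
    intro s hs
    rw [hCs s hs, hshift (s:ℂ), myconj_mul U hU']
    have h : (fun i => ((d i : ℂ) + s)⁻¹ * ((d i : ℂ) + s)) = fun _ => (1:ℂ) := by
      funext i; exact inv_mul_cancel₀ (hEne s hs i)
    rw [h, myconj_one U hU]
  -- partial products
  set F : ℕ → Matrix (Fin N) (Fin N) ℂ := fun k =>
    ((List.range k).map (fun j => (A - (p j : ℂ) • 1) * (A + (p j : ℂ) • 1)⁻¹)).prod with hF
  have hFsucc : ∀ k, F (k+1) = F k * ((A - (p k : ℂ) • 1) * (A + (p k : ℂ) • 1)⁻¹) := by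
    intro k
    rw [hF]
    simp [List.range_succ]
  set w : ℕ → Fin N → ℂ := fun k i => ∏ j ∈ Finset.range k,
    (((d i : ℂ) - p j) * ((d i : ℂ) + p j)⁻¹) with hw
  have hfactor : ∀ j, j < r → (A - (p j : ℂ) • 1) * (A + (p j : ℂ) • 1)⁻¹
      = U * diagonal (fun i => ((d i : ℂ) - p j) * ((d i : ℂ) + p j)⁻¹) * Uᴴ := by
    intro j hj
    rw [hshift' ((p j : ℝ) : ℂ), hCs (p j) (hp j hj), myconj_mul U hU']
  have hFdiag : ∀ k, k ≤ r → F k = U * diagonal (w k) * Uᴴ := by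
    intro k
    induction k with
    | zero =>
        intro _
        rw [hF]
        simp only [List.range_zero, List.map_nil, List.prod_nil]
        have h0 : w 0 = fun _ => (1:ℂ) := by
          funext i; simp [hw]
        rw [h0, myconj_one U hU]
    | succ k ih =>
        intro hk
        have hkr : k < r := hk
        rw [hFsucc, ih (le_of_lt hkr), hfactor k hkr, myconj_mul U hU']
        have hws : (fun i => w k i * ((((d i : ℝ):ℂ) - p k) * (((d i : ℝ):ℂ) + p k)⁻¹))
            = w (k+1) := by
          funext i; simp [hw, Finset.prod_range_succ]
        rw [hws]
  -- commutation helper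
  have hcommF : ∀ k, k ≤ r → ∀ v : Fin N → ℂ,
      (U * diagonal v * Uᴴ) * F k = F k * (U * diagonal v * Uᴴ) := by
    intro k hk v
    rw [hFdiag k hk, myconj_comm U hU']
  -- closed form of the iterates
  have hZk : ∀ k, k < r → adiZ A B p k
      = (Real.sqrt (2 * p k) : ℂ) • ((A + (p k : ℂ) • 1)⁻¹ * (F k * B)) := by
    intro k
    induction k with
    | zero =>
        intro _
        show adiZ A B p 0 = _
        rw [adiZ]
        congr 1
        rw [hF]
        simp
    | succ k ih =>
        intro hk
        have hkr : k < r := Nat.lt_of_succ_lt hk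
        have hpk := hp k hkr
        have hpk1 := hp (k+1) hk
        rw [adiZ, ih hkr]
        have hone : (1 : Matrix (Fin N) (Fin N) ℂ)
            - ((p (k + 1) + p k : ℝ) : ℂ) • (A + (p (k+1) : ℂ) • 1)⁻¹
            = (A - (p k : ℂ) • 1) * (A + (p (k+1) : ℂ) • 1)⁻¹ := by
          have hsplit : A - (p k : ℂ) • 1
              = (A + (p (k+1) : ℂ) • 1) - ((p (k + 1) + p k : ℝ) : ℂ) • 1 := by
            rw [Complex.ofReal_add]
            module
          rw [hsplit, sub_mul, hmulinv (p (k+1)) hpk1, Matrix.smul_mul, one_mul]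
        rw [hone]
        rw [Matrix.mul_smul, smul_smul]
        have hscal : ((Real.sqrt (p (k+1) / p k) : ℝ) : ℂ) * ((Real.sqrt (2 * p k) : ℝ) : ℂ)
            = ((Real.sqrt (2 * p (k+1)) : ℝ) : ℂ) := by
          rw [← Complex.ofReal_mul]
          congr 1
          rw [← Real.sqrt_mul (by positivity)]
          congr 1
          field_simp
        rw [hscal]
        congr 1
        -- matrix part
        have lhs_eq : (A - (p k : ℂ) • 1) * (A + (p (k+1) : ℂ) • 1)⁻¹
            * ((A + (p k : ℂ) • 1)⁻¹ * (F k * B))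
            = ((A - (p k : ℂ) • 1) * (A + (p (k+1) : ℂ) • 1)⁻¹
              * (A + (p k : ℂ) • 1)⁻¹ * F k) * B := by
          simp only [Matrix.mul_assoc, mul_assoc]
        have rhs_eq : (A + (p (k+1) : ℂ) • 1)⁻¹ * (F (k+1) * B)
            = ((A + (p (k+1) : ℂ) • 1)⁻¹ * F (k+1)) * B := by
          simp only [Matrix.mul_assoc]
        rw [lhs_eq, rhs_eq]
        congr 1
        -- now a pure square-matrix identity among commuting diagonalizable matrices
        rw [hFsucc, hFdiag k (le_of_lt hkr), hfactor k hkr,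
          hshift' ((p k : ℝ) : ℂ), hCs (p (k+1)) hpk1, hCs (p k) hpk]
        rw [myconj_mul U hU', myconj_mul U hU', myconj_mul U hU',
          myconj_mul U hU', myconj_mul U hU']
        apply myconj_congr
        intro i
        ring
  -- block column sum
  have hsum : Z * Zᴴ = ∑ k ∈ Finset.range r, adiZ A B p k * (adiZ A B p k)ᴴ := by
    ext i j
    have hRHS : (∑ k ∈ Finset.range r, adiZ A B p k * (adiZ A B p k)ᴴ) i j
        = ∑ k ∈ Finset.range r, ∑ l, adiZ A B p k i l * star (adiZ A B p k j l) := by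
      rw [Matrix.sum_apply]
      apply Finset.sum_congr rfl
      intro k _
      rw [Matrix.mul_apply]
      apply Finset.sum_congr rfl
      intro l _
      rw [Matrix.conjTranspose_apply]
    rw [hRHS, ← Fin.sum_univ_eq_sum_range, Matrix.mul_apply, hZ]
    rw [Fintype.sum_prod_type]
    apply Finset.sum_congr rfl
    intro k _
    apply Finset.sum_congr rfl
    intro l _
    simp [Matrix.conjTranspose_apply]
  -- the main induction
  have hAh : Aᴴ = A := hA
  have main : ∀ k, k ≤ r →
      X - ∑ j ∈ Finset.range k, adiZ A B p j * (adiZ A B p j)ᴴ = F k * X * (F k)ᴴ := by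
    intro k
    induction k with
    | zero =>
        intro _
        rw [hF]
        simp
    | succ k ih =>
        intro hk
        have hkr : k < r := hk
        have hpk := hp k hkr
        rw [Finset.sum_range_succ, ← sub_sub, ih (le_of_lt hkr)]
        set Y : Matrix (Fin N) (Fin N) ℂ := F k * X * (F k)ᴴ with hY
        set C : Matrix (Fin N) (Fin N) ℂ := (A + (p k : ℂ) • 1)⁻¹ with hC
        set S : Matrix (Fin N) (Fin N) ℂ := A - (p k : ℂ) • 1 with hSdef
        have hAF : A * F k = F k * A := by
          rw [hspec]; exact hcommF k (le_of_lt hkr) _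
        have hYlyap : A * Y + Y * Aᴴ = (F k * B) * (F k * B)ᴴ := by
          rw [hY, hAh]
          have h1 : A * (F k * X * (F k)ᴴ) = F k * (A * X) * (F k)ᴴ := by
            calc A * (F k * X * (F k)ᴴ) = (A * F k) * X * (F k)ᴴ := by
                  simp only [Matrix.mul_assoc]
              _ = (F k * A) * X * (F k)ᴴ := by rw [hAF]
              _ = F k * (A * X) * (F k)ᴴ := by simp only [Matrix.mul_assoc]
          have hFA : (F k)ᴴ * A = A * (F k)ᴴ := by
            have := congrArg conjTranspose hAF
            rwa [conjTranspose_mul, conjTranspose_mul, hAh] at this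
          have h2 : (F k * X * (F k)ᴴ) * A = F k * (X * A) * (F k)ᴴ := by
            calc (F k * X * (F k)ᴴ) * A = F k * X * ((F k)ᴴ * A) := by
                  simp only [Matrix.mul_assoc]
              _ = F k * X * (A * (F k)ᴴ) := by rw [hFA]
              _ = F k * (X * A) * (F k)ᴴ := by simp only [Matrix.mul_assoc]
          rw [h1, h2, conjTranspose_mul]
          calc F k * (A * X) * (F k)ᴴ + F k * (X * A) * (F k)ᴴ
              = F k * (A * X + X * A) * (F k)ᴴ := by
                rw [← add_mul, ← mul_add]
            _ = F k * (B * Bᴴ) * (F k)ᴴ := by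
                have hX' : A * X + X * A = B * Bᴴ := by rw [← hX, hAh]
                rw [hX']
            _ = F k * B * (Bᴴ * (F k)ᴴ) := by simp only [Matrix.mul_assoc]
        have hstep := adi_step A hAh (p k) (A + (p k : ℂ) • 1) C rfl
          (hinvmul (p k) hpk) (hmulinv (p k) hpk) Y (F k * B) hYlyap
        -- identify Z_k Z_kᴴ
        have hZZ : adiZ A B p k * (adiZ A B p k)ᴴ
            = ((2 * p k : ℝ) : ℂ) • ((C * (F k * B)) * (C * (F k * B))ᴴ) := by
          rw [hZk k hkr]
          rw [conjTranspose_smul, Matrix.smul_mul, Matrix.mul_smul, smul_smul]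
          congr 1
          rw [Complex.star_def, Complex.conj_ofReal, ← Complex.ofReal_mul,
            Real.mul_self_sqrt (by positivity)]
        rw [hZZ]
        have hCFB : C * (F k * B) = C * (F k * B) := rfl
        rw [show ((2 * p k : ℝ) : ℂ) • ((C * (F k * B)) * (C * (F k * B))ᴴ)
          = ((2 * p k : ℝ) : ℂ) • ((C * (F k * B)) * (C * (F k * B))ᴴ) from rfl]
        have hstep' : Y - ((2 * p k : ℝ) : ℂ) • ((C * (F k * B)) * (C * (F k * B))ᴴ)
            = (S * C) * Y * (S * C)ᴴ := hstep
        rw [hstep']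
        -- rearrange to F (k+1) X F(k+1)ᴴ
        have hSC : S * C = U * diagonal
            (fun i => ((d i : ℂ) - p k) * ((d i : ℂ) + p k)⁻¹) * Uᴴ := by
          rw [hSdef, hC]; exact hfactor k hkr
        have hcomm2 : (S * C) * F k = F k * (S * C) := by
          rw [hSC]; exact hcommF k (le_of_lt hkr) _
        have hcomm2' : (F k)ᴴ * (S * C)ᴴ = (S * C)ᴴ * (F k)ᴴ := by
          have := congrArg conjTranspose hcomm2
          rwa [Matrix.conjTranspose_mul (S * C) (F k), Matrix.conjTranspose_mul (F k) (S * C)]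
            at this
        rw [hFsucc]
        have : (S * C) * Y * (S * C)ᴴ
            = (F k * (S * C)) * X * (F k * (S * C))ᴴ := by
          rw [hY]
          calc (S * C) * (F k * X * (F k)ᴴ) * (S * C)ᴴ
              = ((S * C) * F k) * X * ((F k)ᴴ * (S * C)ᴴ) := by
                simp only [Matrix.mul_assoc]
            _ = (F k * (S * C)) * X * ((S * C)ᴴ * (F k)ᴴ) := by rw [hcomm2, hcomm2']
            _ = (F k * (S * C)) * X * (F k * (S * C))ᴴ := by
                rw [Matrix.conjTranspose_mul (F k) (S * C)]
        rw [this]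
    -- end main
  have hφF : φA = F r := by
    rw [hφA, hF]
    congr 1
    have hlist : (do let a ← List.finRange r; pure ((a : ℕ))) = List.range r := by
      simp only [List.bind_eq_flatMap, List.pure_def]
      rw [← List.map_eq_flatMap]
      exact List.ext_getElem (by simp) (by simp)
    rw [hlist]
  have part1 : X - Z * Zᴴ = φA * X * φAᴴ := by
    rw [hsum, hφF]
    exact main r (le_refl r)
  refine ⟨part1, ?_⟩
  -- Part 2 : the norm bound
  set a : ℝ := ⨅ i, d i with ha
  set b : ℝ := ⨆ i, d i with hb
  set f : ℝ → ℝ := fun x => |φ x| ^ 2 with hfdef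
  set SS : ℝ := ⨆ x ∈ Set.Icc a b, f x with hSS
  have hd_mem : ∀ i, d i ∈ Set.Icc a b := by
    intro i
    constructor
    · exact ciInf_le (Finite.bddBelow_range d) i
    · exact le_ciSup (Finite.bddAbove_range d) i
  have hapos : 0 < a := by
    obtain ⟨i₀, hi₀⟩ := Finite.exists_min d
    have : d i₀ ≤ a := le_ciInf hi₀
    have := hdpos i₀
    linarith [le_ciInf hi₀, hdpos i₀]
  have hφcont : ContinuousOn φ (Set.Icc a b) := by
    rw [hφ]
    apply continuousOn_finset_prod
    intro j _
    apply ContinuousOn.div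
    · exact (continuous_id.sub continuous_const).continuousOn
    · exact (continuous_id.add continuous_const).continuousOn
    · intro x hx
      have hx1 := hx.1
      have := hp (j : ℕ) j.2
      intro hzero
      linarith [hx.1]
  have hfcont : ContinuousOn f (Set.Icc a b) := by
    rw [hfdef]
    exact (hφcont.abs).pow 2
  have hbdd : BddAbove (f '' Set.Icc a b) :=
    (isCompact_Icc.image_of_continuousOn hfcont).bddAbove
  obtain ⟨Cb, hCb⟩ := hbdd
  have hgbdd : BddAbove (Set.range fun x => ⨆ _ : x ∈ Set.Icc a b, f x) := by
    refine ⟨max Cb 0, ?_⟩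
    rintro y ⟨x, rfl⟩
    have hbeta : (fun x => ⨆ _ : x ∈ Set.Icc a b, f x) x
        = ⨆ _ : x ∈ Set.Icc a b, f x := rfl
    rw [hbeta]
    by_cases hx : x ∈ Set.Icc a b
    · rw [ciSup_pos hx]
      exact le_max_of_le_left (hCb ⟨x, hx, rfl⟩)
    · rw [ciSup_neg hx, Real.sSup_empty]
      exact le_max_right _ _
  have hfS : ∀ i, f (d i) ≤ SS := by
    intro i
    rw [hSS]
    have h1 : (⨆ _ : d i ∈ Set.Icc a b, f (d i)) = f (d i) := ciSup_pos (hd_mem i)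
    rw [← h1]
    exact le_ciSup hgbdd (d i)
  have hSSnonneg : 0 ≤ SS := by
    have := hfS ⟨0, hN⟩
    have h2 : 0 ≤ f (d ⟨0, hN⟩) := by rw [hfdef]; positivity
    linarith
  -- norm of φA
  have hφAdiag : φA = U * diagonal (fun i => ((φ (d i) : ℝ) : ℂ)) * Uᴴ := by
    rw [hφF, hFdiag r (le_refl r)]
    apply myconj_congr
    intro i
    have hw1 : w r i = ∏ j ∈ Finset.range r, (((d i : ℂ) - p j) * ((d i : ℂ) + p j)⁻¹) := by
      rw [hw]
    rw [hw1, hφ]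
    rw [← Fin.prod_univ_eq_prod_range (fun j => (((d i : ℂ) - p j) * ((d i : ℂ) + p j)⁻¹)) r]
    rw [Complex.ofReal_prod]
    apply Finset.prod_congr rfl
    intro j _
    rw [Complex.ofReal_div, div_eq_mul_inv]
    push_cast
    ring
  have hUnorm : ‖U‖ ≤ 1 := by
    have h1 : ‖Uᴴ * U‖ = ‖U‖ * ‖U‖ := Matrix.l2_opNorm_conjTranspose_mul_self U
    rw [hU'] at h1
    have hone : ‖(1 : Matrix (Fin N) (Fin N) ℂ)‖ ≤ 1 := by
      rw [← diagonal_one]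
      exact l2norm_diagonal_le _ 1 zero_le_one (fun i => by simp)
    nlinarith [norm_nonneg U]
  have hUHnorm : ‖Uᴴ‖ ≤ 1 := by
    rw [Matrix.l2_opNorm_conjTranspose]
    exact hUnorm
  have hDnorm : ‖diagonal (fun i => ((φ (d i) : ℝ) : ℂ))‖ ≤ Real.sqrt SS := by
    apply l2norm_diagonal_le _ _ (Real.sqrt_nonneg _)
    intro i
    rw [Complex.norm_real, Real.norm_eq_abs]
    have h1 : |φ (d i)| = Real.sqrt (f (d i)) := by
      rw [hfdef, Real.sqrt_sq_eq_abs, abs_abs]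
    rw [h1]
    exact Real.sqrt_le_sqrt (hfS i)
  have hφAnorm : ‖φA‖ ≤ Real.sqrt SS := by
    rw [hφAdiag]
    calc ‖U * diagonal (fun i => ((φ (d i) : ℝ) : ℂ)) * Uᴴ‖
        ≤ ‖U * diagonal (fun i => ((φ (d i) : ℝ) : ℂ))‖ * ‖Uᴴ‖ := Matrix.l2_opNorm_mul _ _
      _ ≤ ‖U‖ * ‖diagonal (fun i => ((φ (d i) : ℝ) : ℂ))‖ * ‖Uᴴ‖ := by
          apply mul_le_mul_of_nonneg_right _ (norm_nonneg _)
          exact Matrix.l2_opNorm_mul _ _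
      _ ≤ 1 * Real.sqrt SS * 1 := by
          apply mul_le_mul _ hUHnorm (norm_nonneg _) (by positivity)
          exact mul_le_mul hUnorm hDnorm (norm_nonneg _) zero_le_one
      _ = Real.sqrt SS := by ring
  rw [part1, opNorm_eq_l2, opNorm_eq_l2]
  calc ‖φA * X * φAᴴ‖ ≤ ‖φA * X‖ * ‖φAᴴ‖ := Matrix.l2_opNorm_mul _ _
    _ ≤ ‖φA‖ * ‖X‖ * ‖φAᴴ‖ := by
        apply mul_le_mul_of_nonneg_right _ (norm_nonneg _)
        exact Matrix.l2_opNorm_mul _ _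
    _ = ‖φA‖ * ‖X‖ * ‖φA‖ := by rw [Matrix.l2_opNorm_conjTranspose]
    _ ≤ Real.sqrt SS * ‖X‖ * Real.sqrt SS := by
        apply mul_le_mul _ hφAnorm (norm_nonneg _) (by positivity)
        exact mul_le_mul_of_nonneg_right hφAnorm (norm_nonneg _)
    _ = ‖X‖ * (Real.sqrt SS * Real.sqrt SS) := by ring
    _ = ‖X‖ * SS := by rw [Real.mul_self_sqrt hSSnonneg]
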